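/- Let d ≥ 1, K > 0, and f(x) = (e^{x₁} ∧ ⋯ ∧ e^{x_d} − K)⁺ for x ∈ ℝ^d, the payoff of a call on the minimum of d assets. For z ∈ ℂ^d with Im z_j > 0 for all j and Σ_j Im z_j > 1, the Fourier transform ∫_{ℝ^d} e^{i⟨z,x⟩} f(x) dx exists (as an absolutely convergent integral) and equals −K^{1+iΣ_j z_j} / ((−1)^d (1 + iΣ_j z_j) Π_j (i z_j)). -/

import Mathlib

open MeasureTheory Complex

open Set Filter

lemma aux_rpow_int {K : ℝ} (hK : 0 < K) {b : ℝ} (hb : 1 < b) :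
    IntegrableOn (fun t : ℝ => Real.exp (-b * Real.log (K + t))) (Ioi 0) := by
  have h1 : IntegrableOn (fun s : ℝ => s ^ (-b)) (Ioi K) :=
    integrableOn_Ioi_rpow_of_lt (by linarith) hK
  have h2 : IntegrableOn (fun t : ℝ => (K + t) ^ (-b)) (Ioi 0) := by
    have hmp : MeasurePreserving (fun t : ℝ => K + t) volume volume :=
      measurePreserving_add_left volume K
    have hemb : MeasurableEmbedding (fun t : ℝ => K + t) :=
      (MeasurableEquiv.addLeft K).measurableEmbedding
    have := (hmp.integrableOn_comp_preimage hemb (f := fun s : ℝ => s ^ (-b)) (s := Ioi K)).mpr h1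
    have hpre : (fun t : ℝ => K + t) ⁻¹' Ioi K = Ioi 0 := by
      ext t; simp [Set.mem_Ioi]
    rwa [hpre] at this
  refine h2.congr_fun (fun t ht => ?_) measurableSet_Ioi
  dsimp only
  rw [Real.rpow_def_of_pos (by linarith [ht.out] : (0:ℝ) < K + t)]
  ring_nf

lemma aux_integral_exp_neg {b : ℝ} (hb : 0 < b) (a : ℝ) :
    ∫ u in Ioi a, Real.exp (-b * u) = Real.exp (-b * a) / b := by
  have hder : ∀ u ∈ Ici a, HasDerivAt (fun u : ℝ => -Real.exp (-b * u) / b) (Real.exp (-b * u)) u := by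
    intro u _
    have h1 : HasDerivAt (fun u : ℝ => -b * u) (-b) u := by
      simpa using (hasDerivAt_id u).const_mul (-b)
    have h2 := (h1.exp.neg).div_const b
    refine h2.congr_deriv ?_
    rw [div_eq_iff hb.ne']; ring
  have htend : Tendsto (fun u : ℝ => -Real.exp (-b * u) / b) atTop (nhds 0) := by
    have h1 : Tendsto (fun u : ℝ => -b * u) atTop atBot :=
      tendsto_id.const_mul_atTop_of_neg (neg_lt_zero.mpr hb)
    simpa using ((Real.tendsto_exp_atBot.comp h1).neg.div_const b)
  rw [integral_Ioi_of_hasDerivAt_of_tendsto' hder (exp_neg_integrableOn_Ioi a hb) htend]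
  field_simp
  ring

lemma aux_cexp_log_integrableOn {K : ℝ} (hK : 0 < K) {s : ℂ} (hs : 1 < s.im) :
    IntegrableOn (fun t : ℝ => Complex.exp (I * s * Real.log (K + t))) (Ioi 0) := by
  refine Integrable.mono' (aux_rpow_int hK hs) ?_ ?_
  · exact (Complex.measurable_exp.comp ((Complex.measurable_ofReal.comp
      (Real.measurable_log.comp (measurable_const.add measurable_id))).const_mul
      (I * s))).aestronglyMeasurable.restrict
  · filter_upwards with t
    rw [Complex.norm_exp]
    apply le_of_eq
    congr 1
    simp [Complex.mul_re, Complex.mul_im]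

lemma aux_final {K : ℝ} (hK : 0 < K) {s : ℂ} (hs : 1 < s.im) :
    ∫ t in Ioi (0:ℝ), Complex.exp (I * s * Real.log (K + t))
      = -Complex.exp ((1 + I * s) * Real.log K) / (1 + I * s) := by
  have hone : (1 + I * s) ≠ 0 := by
    intro h
    have : (1 + I * s).re = 0 := by rw [h]; simp
    simp [Complex.add_re, Complex.mul_re] at this
    linarith
  have hder : ∀ t ∈ Ici (0:ℝ), HasDerivAt
      (fun t : ℝ => Complex.exp ((1 + I * s) * Real.log (K + t)) / (1 + I * s))
      (Complex.exp (I * s * Real.log (K + t))) t := by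
    intro t ht
    have hKt : (0:ℝ) < K + t := by linarith [ht.out]
    have h1 : HasDerivAt (fun t : ℝ => Real.log (K + t)) ((K + t)⁻¹) t := by
      have := (Real.hasDerivAt_log (ne_of_gt hKt)).comp t ((hasDerivAt_id t).const_add K)
      simpa [Function.comp_def] using this
    have h2 := ((h1.ofReal_comp.const_mul (1 + I * s)).cexp).div_const (1 + I * s)
    refine h2.congr_deriv ?_
    have he : Complex.exp ((1 + I * s) * (Real.log (K + t) : ℂ))
        = (K + t : ℝ) * Complex.exp (I * s * Real.log (K + t)) := by
      rw [add_mul, one_mul, Complex.exp_add, ← Complex.ofReal_exp, Real.exp_log hKt]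
    have hKtne : ((K + t : ℝ) : ℂ) ≠ 0 := by
      exact_mod_cast ne_of_gt hKt
    rw [he, Complex.ofReal_inv, mul_div_assoc,
      mul_comm (1 + I * s) ((K + t : ℝ) : ℂ)⁻¹, mul_div_assoc, div_self hone, mul_one,
      mul_comm ((K + t : ℝ) : ℂ),
      mul_assoc (Complex.exp (I * s * (Real.log (K + t) : ℂ))), mul_inv_cancel₀ hKtne, mul_one]
  have htend : Tendsto (fun t : ℝ => Complex.exp ((1 + I * s) * Real.log (K + t)) / (1 + I * s))
      atTop (nhds 0) := by
    rw [tendsto_zero_iff_norm_tendsto_zero]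
    have heq : ∀ t : ℝ, ‖Complex.exp ((1 + I * s) * (Real.log (K + t) : ℂ)) / (1 + I * s)‖
        = Real.exp ((1 - s.im) * Real.log (K + t)) / ‖(1 + I * s : ℂ)‖ := by
      intro t
      rw [norm_div, Complex.norm_exp]
      have hre : ((1 + I * s) * (Real.log (K + t) : ℂ)).re = (1 - s.im) * Real.log (K + t) := by
        simp only [Complex.mul_re, Complex.add_re, Complex.add_im, Complex.one_re,
          Complex.one_im, Complex.I_re, Complex.I_im, Complex.ofReal_re, Complex.ofReal_im,
          Complex.mul_im, zero_mul, mul_zero, one_mul, zero_sub, sub_zero, zero_add]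
        ring
      rw [hre]
    simp_rw [heq]
    have hlog : Tendsto (fun t : ℝ => Real.log (K + t)) atTop atTop :=
      Real.tendsto_log_atTop.comp (tendsto_atTop_add_const_left _ K tendsto_id)
    have h1 : Tendsto (fun t : ℝ => (1 - s.im) * Real.log (K + t)) atTop atBot :=
      hlog.const_mul_atTop_of_neg (by linarith)
    simpa using (Real.tendsto_exp_atBot.comp h1).div_const ‖(1 + I * s : ℂ)‖
  rw [integral_Ioi_of_hasDerivAt_of_tendsto' hder (aux_cexp_log_integrableOn hK hs) htend]
  rw [add_zero]
  ring

lemma aux_norm_cexp (w : ℂ) (u : ℝ) : ‖Complex.exp (I * w * u)‖ = Real.exp (-w.im * u) := by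
  rw [Complex.norm_exp]
  congr 1
  simp [Complex.mul_re, Complex.mul_im]

lemma aux_integrableOn_cexp {w : ℂ} (hw : 0 < w.im) (a : ℝ) :
    IntegrableOn (fun u : ℝ => Complex.exp (I * w * u)) (Ioi a) := by
  refine Integrable.mono' (exp_neg_integrableOn_Ioi a hw) ?_ ?_
  · exact (Complex.measurable_exp.comp
      ((Complex.measurable_ofReal).const_mul (I * w))).aestronglyMeasurable.restrict
  · filter_upwards with u using le_of_eq (aux_norm_cexp w u)

lemma aux_hasDerivAt (w : ℂ) (hw : w ≠ 0) (u : ℝ) :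
    HasDerivAt (fun u : ℝ => Complex.exp (I * w * u) / (I * w)) (Complex.exp (I * w * u)) u := by
  have h1 : HasDerivAt (fun u : ℝ => I * w * (u:ℂ)) (I * w) u := by
    simpa using (Complex.ofRealCLM.hasDerivAt (x := u)).const_mul (I * w)
  have h2 := (h1.cexp).div_const (I * w)
  have hiw : I * w ≠ 0 := by simp [Complex.I_ne_zero, hw]
  simpa [mul_div_assoc, mul_div_cancel_right₀ _ hiw] using h2

lemma aux_tendsto_cexp {w : ℂ} (hw : 0 < w.im) :
    Tendsto (fun u : ℝ => Complex.exp (I * w * u) / (I * w)) atTop (nhds 0) := by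
  rw [tendsto_zero_iff_norm_tendsto_zero]
  simp_rw [norm_div, aux_norm_cexp]
  have h1 : Tendsto (fun u : ℝ => -w.im * u) atTop atBot := by
    exact tendsto_id.const_mul_atTop_of_neg (neg_lt_zero.mpr hw)
  simpa using ((Real.tendsto_exp_atBot.comp h1).div_const ‖(I*w:ℂ)‖)

lemma aux_integral_cexp {w : ℂ} (hw : 0 < w.im) (a : ℝ) :
    ∫ u in Ioi a, Complex.exp (I * w * u) = -Complex.exp (I * w * a) / (I * w) := by
  have hwne : w ≠ 0 := by intro h; simp [h] at hw
  have := integral_Ioi_of_hasDerivAt_of_tendsto' (f := fun u : ℝ => Complex.exp (I * w * u) / (I * w))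
    (f' := fun u : ℝ => Complex.exp (I * w * u)) (fun x _ => aux_hasDerivAt w hwne x)
    (aux_integrableOn_cexp hw a) (aux_tendsto_cexp hw)
  rw [this]; ring

/-- Fourier transform of the payoff of a call on the minimum of `d ≥ 1` assets,
`f(x) = (e^{x₁} ∧ ⋯ ∧ e^{x_d} - K)⁺`, `K > 0` (here the dimension is `d+1 ≥ 1`): for
`z ∈ ℂ^d` with `Im z_j > 0` for all `j` and `Σ_j Im z_j > 1`, the Fourier transform
`∫_{ℝ^d} e^{i⟨z,x⟩} f(x) dx` exists as an absolutely convergent integral and equals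
`-K^{1+iΣ_j z_j} / ((-1)^d (1+iΣ_j z_j) Π_j (i z_j))`. -/
theorem fourier_min_call (d : ℕ) (K : ℝ) (hK : 0 < K)
    (z : Fin (d + 1) → ℂ) (hz : ∀ j, 0 < (z j).im) (hzsum : 1 < ∑ j, (z j).im) :
    Integrable (fun x : Fin (d + 1) → ℝ =>
      Complex.exp (Complex.I * ∑ j, z j * (x j : ℂ)) *
        ((max ((Finset.univ.inf' Finset.univ_nonempty fun j => Real.exp (x j)) - K) 0 : ℝ) : ℂ))
      (volume : Measure (Fin (d + 1) → ℝ)) ∧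
    ∫ x : Fin (d + 1) → ℝ,
        Complex.exp (Complex.I * ∑ j, z j * (x j : ℂ)) *
          ((max ((Finset.univ.inf' Finset.univ_nonempty fun j => Real.exp (x j)) - K) 0 : ℝ) : ℂ) =
      - Complex.exp ((1 + Complex.I * ∑ j, z j) * Real.log K) /
          ((-1 : ℂ) ^ (d + 1) * (1 + Complex.I * ∑ j, z j) * ∏ j, (Complex.I * z j)) := by
  classical
  set s : ℂ := ∑ j, z j with hsdef
  have hs1 : 1 < s.im := by
    rw [hsdef, Complex.im_sum]; exact hzsum
  have hzne : ∀ j, z j ≠ 0 := by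
    intro j h
    have := hz j
    rw [h] at this
    simp at this
  set H : ℝ × (Fin (d + 1) → ℝ) → ℂ := fun p =>
    if 0 < p.1 then
      ∏ j, (if Real.log (K + p.1) < p.2 j then Complex.exp (I * z j * p.2 j) else 0)
    else 0 with hHdef
  have hHmeas : Measurable H := by
    refine Measurable.ite (measurableSet_lt measurable_const measurable_fst)
      (Finset.measurable_prod _ fun j _ => ?_) measurable_const
    refine Measurable.ite ?_ ?_ measurable_const
    · exact measurableSet_lt (Real.measurable_log.comp (measurable_const.add measurable_fst))
        ((measurable_pi_apply j).comp measurable_snd)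
    · exact Complex.measurable_exp.comp ((Complex.measurable_ofReal.comp
        ((measurable_pi_apply j).comp measurable_snd)).const_mul (I * z j))
  have hg_ind : ∀ (a : ℝ) (j : Fin (d+1)),
      (fun u : ℝ => if a < u then Complex.exp (I * z j * u) else 0)
      = (Ioi a).indicator fun u : ℝ => Complex.exp (I * z j * u) := by
    intro a j; ext u; simp [Set.indicator_apply]
  have hg_int : ∀ (a : ℝ) (j : Fin (d+1)),
      Integrable (fun u : ℝ => if a < u then Complex.exp (I * z j * u) else 0) := by
    intro a j
    rw [hg_ind, integrable_indicator_iff measurableSet_Ioi]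
    exact aux_integrableOn_cexp (hz j) a
  have hg_val : ∀ (a : ℝ) (j : Fin (d+1)),
      ∫ u : ℝ, (if a < u then Complex.exp (I * z j * u) else 0)
      = -Complex.exp (I * z j * a) / (I * z j) := by
    intro a j
    rw [hg_ind, integral_indicator measurableSet_Ioi]
    exact aux_integral_cexp (hz j) a
  have hg_norm_val : ∀ (a : ℝ) (j : Fin (d+1)),
      ∫ u : ℝ, ‖(if a < u then Complex.exp (I * z j * u) else 0 : ℂ)‖
      = Real.exp (-(z j).im * a) / (z j).im := by
    intro a j
    have h1 : (fun u : ℝ => ‖(if a < u then Complex.exp (I * z j * u) else 0 : ℂ)‖)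
        = (Ioi a).indicator fun u => Real.exp (-(z j).im * u) := by
      ext u
      by_cases h : a < u
      · rw [if_pos h, Set.indicator_of_mem (Set.mem_Ioi.mpr h), aux_norm_cexp]
      · rw [if_neg h, Set.indicator_of_notMem (by simpa using h), norm_zero]
    rw [h1, integral_indicator measurableSet_Ioi, aux_integral_exp_neg (hz j) a]
  have hslice : ∀ t : ℝ, Integrable (fun x : Fin (d+1) → ℝ => H (t, x)) := by
    intro t
    by_cases ht : 0 < t
    · simp only [hHdef, if_pos ht]
      exact Integrable.fintype_prod fun j => hg_int (Real.log (K + t)) j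
    · simp only [hHdef, if_neg ht]
      exact integrable_zero _ _ _
  have hnormslice : ∀ t : ℝ, (∫ x : Fin (d+1) → ℝ, ‖H (t, x)‖)
      = (Ioi (0:ℝ)).indicator (fun t => (∏ j, ((z j).im)⁻¹) *
          Real.exp (-(∑ j, (z j).im) * Real.log (K + t))) t := by
    intro t
    by_cases ht : 0 < t
    · rw [Set.indicator_of_mem (Set.mem_Ioi.mpr ht)]
      simp only [hHdef, if_pos ht]
      have h1 : ∀ x : Fin (d+1) → ℝ,
          ‖∏ j, (if Real.log (K+t) < x j then Complex.exp (I * z j * x j) else 0)‖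
          = ∏ j, ‖(if Real.log (K+t) < x j then Complex.exp (I * z j * x j) else 0 : ℂ)‖ :=
        fun x => norm_prod _ _
      simp_rw [h1]
      rw [MeasureTheory.integral_fintype_prod_volume_eq_prod (ι := Fin (d+1))
        (f := fun j u => ‖(if Real.log (K+t) < u then Complex.exp (I * z j * u) else 0 : ℂ)‖)]
      rw [Finset.prod_congr rfl fun j _ => hg_norm_val (Real.log (K+t)) j]
      rw [Finset.prod_div_distrib, ← Real.exp_sum, div_eq_mul_inv, mul_comm,
        ← Finset.prod_inv_distrib]
      congr 1
      congr 1
      rw [← Finset.sum_mul, ← Finset.sum_neg_distrib]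
    · rw [Set.indicator_of_notMem (by simpa using ht)]
      simp only [hHdef, if_neg ht]
      simp
  have hnorm_int : Integrable (fun t : ℝ => ∫ x : Fin (d+1) → ℝ, ‖H (t, x)‖) := by
    rw [funext hnormslice, integrable_indicator_iff measurableSet_Ioi]
    exact (aux_rpow_int hK hzsum).const_mul _
  have hH_int : Integrable H ((volume : Measure ℝ).prod (volume : Measure (Fin (d+1) → ℝ))) :=
    (integrable_prod_iff hHmeas.aestronglyMeasurable).mpr
      ⟨Eventually.of_forall hslice, hnorm_int⟩
  have hFx : ∀ x : Fin (d+1) → ℝ, (∫ t : ℝ, H (t, x)) =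
      Complex.exp (I * ∑ j, z j * (x j : ℂ)) *
        ((max ((Finset.univ.inf' Finset.univ_nonempty fun j => Real.exp (x j)) - K) 0 : ℝ) : ℂ) := by
    intro x
    set m : ℝ := Finset.univ.inf' Finset.univ_nonempty fun j => Real.exp (x j) with hm
    have hHx : ∀ t : ℝ, H (t, x) =
        (Ioo (0:ℝ) (m - K)).indicator (fun _ => Complex.exp (I * ∑ j, z j * (x j : ℂ))) t := by
      intro t
      by_cases ht : 0 < t
      · simp only [hHdef, if_pos ht]
        by_cases hcond : ∀ j, Real.log (K + t) < x j
        · have hmem : t ∈ Ioo (0:ℝ) (m - K) := by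
            refine ⟨ht, ?_⟩
            have h1 : K + t < m := by
              rw [hm, Finset.lt_inf'_iff]
              intro j _
              have h2 := hcond j
              rwa [Real.log_lt_iff_lt_exp (by linarith)] at h2
            linarith
          rw [Set.indicator_of_mem hmem]
          rw [Finset.prod_congr rfl fun j _ => if_pos (hcond j), ← Complex.exp_sum]
          congr 1
          rw [Finset.mul_sum]
          exact Finset.sum_congr rfl fun j _ => (mul_assoc _ _ _)
        · push_neg at hcond
          obtain ⟨j0, hj0⟩ := hcond
          have hnot : t ∉ Ioo (0:ℝ) (m - K) := by
            intro hmem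
            have h1 : K + t < m := by linarith [hmem.2]
            have h2 : K + t < Real.exp (x j0) :=
              lt_of_lt_of_le h1 (by rw [hm]; exact Finset.inf'_le _ (Finset.mem_univ j0))
            rw [← Real.log_lt_iff_lt_exp (by linarith)] at h2
            exact absurd h2 (not_lt.mpr hj0)
          rw [Set.indicator_of_notMem hnot]
          exact Finset.prod_eq_zero (Finset.mem_univ j0) (if_neg (not_lt.mpr hj0))
      · simp only [hHdef, if_neg ht]
        rw [Set.indicator_of_notMem (fun hmem => ht hmem.1)]
    rw [funext hHx, integral_indicator_const _ measurableSet_Ioo, Real.volume_real_Ioo,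
      Complex.real_smul, sub_zero, mul_comm]
  have hprodne : (∏ j, (I * z j)) ≠ 0 :=
    Finset.prod_ne_zero_iff.mpr fun j _ => mul_ne_zero I_ne_zero (hzne j)
  have hone : (1 + I * s) ≠ 0 := by
    intro h
    have h2 : (1 + I * s).re = 0 := by rw [h]; simp
    simp only [Complex.add_re, Complex.one_re, Complex.mul_re, Complex.I_re, Complex.I_im,
      zero_mul, one_mul, zero_sub] at h2
    linarith
  have hpowne : ((-1:ℂ)) ^ (d+1) ≠ 0 := pow_ne_zero _ (by norm_num)
  have hsq : ((-1:ℂ)) ^ (d+1) * ((-1:ℂ)) ^ (d+1) = 1 := by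
    rw [← pow_add, ← two_mul, pow_mul]
    norm_num
  refine ⟨hH_int.integral_prod_right.congr (Eventually.of_forall hFx), ?_⟩
  have hswap := integral_integral_swap (f := fun (t : ℝ) (x : Fin (d+1) → ℝ) => H (t, x)) hH_int
  have hslice_val : ∀ t : ℝ, (∫ x : Fin (d+1) → ℝ, H (t, x)) = (Ioi (0:ℝ)).indicator
      (fun t => ((-1:ℂ) ^ (d+1) / ∏ j, (I * z j)) * Complex.exp (I * s * Real.log (K + t))) t := by
    intro t
    by_cases ht : 0 < t
    · rw [Set.indicator_of_mem (Set.mem_Ioi.mpr ht)]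
      simp only [hHdef, if_pos ht]
      rw [MeasureTheory.integral_fintype_prod_volume_eq_prod (ι := Fin (d+1))
        (f := fun j u => if Real.log (K+t) < u then Complex.exp (I * z j * u) else 0)]
      rw [Finset.prod_congr rfl fun j _ => hg_val (Real.log (K+t)) j]
      have hstep : ∀ j : Fin (d+1),
          -Complex.exp (I * z j * (Real.log (K+t) : ℂ)) / (I * z j)
          = (-1) * (Complex.exp (I * z j * (Real.log (K+t) : ℂ)) / (I * z j)) := fun j => by
        ring
      rw [Finset.prod_congr rfl fun j _ => hstep j, Finset.prod_mul_distrib,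
        Finset.prod_const, Finset.card_univ, Fintype.card_fin, Finset.prod_div_distrib,
        ← Complex.exp_sum]
      have hsum : ∑ j, I * z j * (Real.log (K+t) : ℂ) = I * s * Real.log (K+t) := by
        rw [← Finset.sum_mul, ← Finset.mul_sum, hsdef]
      rw [hsum]
      ring
    · rw [Set.indicator_of_notMem (by simpa using ht)]
      simp only [hHdef, if_neg ht]
      simp
  rw [integral_congr_ae (Eventually.of_forall fun x => (hFx x).symm), ← hswap,
    integral_congr_ae (Eventually.of_forall hslice_val),
    integral_indicator measurableSet_Ioi, MeasureTheory.integral_const_mul,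
    aux_final hK hs1]
  rw [div_mul_div_comm, div_eq_div_iff (mul_ne_zero hprodne hone)
    (mul_ne_zero (mul_ne_zero hpowne hone) hprodne)]
  have hd2 : ((-1:ℂ)) ^ (d * 2) = 1 := by
    rw [pow_mul']
    norm_num
  ring_nf
  simp only [hd2, mul_one, one_mul]
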